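/- arXiv:1003.2301 — 2 statements merged into one kernel-verified Lean document; each statement's English description precedes it below -/
import Mathlib

section
/- Let g ∈ N, x ∈ R and 1 ≤ i ≠ j ≤ n. If some off-diagonal entry (at a position (p,q) with p ≠ q) of the commutator [g, t_{ij}(x)] = g·t_{ij}(x)·g⁻¹·t_{ij}(x)⁻¹ equals zero, then g ∈ C(n, Ann(RxR)), where RxR is the two-sided ideal generated by x. -/
/- Common definitions: linear groups over an associative ring with identity,
transvections, elementary subgroups, congruence subgroups, and the
stability-theoretic properties of rings, following V. M. Petechuk,
"Stability of rings". Throughout, `GL(n,R)` is realized as the group of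
units `(Matrix (Fin n) (Fin n) R)ˣ`. -/

open Matrix

section Defs

variable (n : ℕ) (R : Type*) [Ring R]

/-- A transvection: an invertible matrix of the form `1 + r·e_{ij}` with `i ≠ j`. -/
def IsTransvection {n : ℕ} {R : Type*} [Ring R] (g : (Matrix (Fin n) (Fin n) R)ˣ) : Prop :=
  ∃ i j : Fin n, i ≠ j ∧ ∃ r : R, g.val = 1 + Matrix.single i j r

/-- `E_X`: the subgroup of `GL(n,R)` generated by the transvections `t_{ij}(x)`, `x ∈ X`,
`i ≠ j`. -/
def Esub (X : Set R) : Subgroup (Matrix (Fin n) (Fin n) R)ˣ :=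
  Subgroup.closure {g | ∃ i j : Fin n, i ≠ j ∧ ∃ x ∈ X, g.val = 1 + Matrix.single i j x}

/-- `E(n,R) = E_R`. -/
def En : Subgroup (Matrix (Fin n) (Fin n) R)ˣ := Esub n R Set.univ

/-- `E(n,I)`: the normal closure of `E_I` in `E(n,R)`. -/
def EnI {R : Type*} [Ring R] (I : TwoSidedIdeal R) : Subgroup (Matrix (Fin n) (Fin n) R)ˣ :=
  Subgroup.closure {g | ∃ h ∈ En n R, ∃ e ∈ Esub n R (I : Set R), g = h * e * h⁻¹}

/-- `Λ_I`: entrywise reduction `GL(n,R) → GL(n, R/I)`. -/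
def lamI {R : Type*} [Ring R] (I : TwoSidedIdeal R) :
    (Matrix (Fin n) (Fin n) R)ˣ →* (Matrix (Fin n) (Fin n) I.ringCon.Quotient)ˣ :=
  Units.map ((RingCon.mk' I.ringCon).mapMatrix.toMonoidHom)

/-- `C_I = ker Λ_I`: the principal congruence subgroup of level `I`. -/
def CIsub {R : Type*} [Ring R] (I : TwoSidedIdeal R) : Subgroup (Matrix (Fin n) (Fin n) R)ˣ :=
  (lamI n I).ker

/-- `C(n,I) = Λ_I⁻¹(ξGL(n,R/I))`. -/
def CnI {R : Type*} [Ring R] (I : TwoSidedIdeal R) : Subgroup (Matrix (Fin n) (Fin n) R)ˣ :=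
  (Subgroup.center _).comap (lamI n I)

/-- `R` is a commutator ring: `[C(n,I), E(n,R)] = E(n,I) ⊴ GL(n,R)` for every
two-sided ideal `I`. -/
def IsCommutatorRing : Prop :=
  ∀ I : TwoSidedIdeal R, ⁅CnI n I, En n R⁆ = EnI n I ∧ (EnI n I).Normal

/-- Iterated commutator subgroup `[H, K, K, …, K]` (`k` copies of `K`). -/
def iterCommutator {G : Type*} [Group G] (H K : Subgroup G) : ℕ → Subgroup G
  | 0 => H
  | m + 1 => ⁅iterCommutator H K m, K⁆

/-- `R` is weakly-commutator of length `k`: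
`[C(n,I), E(n,R), …, E(n,R)] = E(n,I) ⊴ GL(n,R)` (`k` copies of `E(n,R)`)
simultaneously for every two-sided ideal `I`. -/
def IsWeaklyCommutatorRing (k : ℕ) : Prop :=
  0 < k ∧ ∀ I : TwoSidedIdeal R,
    iterCommutator (CnI n I) (En n R) k = EnI n I ∧ (EnI n I).Normal

/-- `R` is a normal ring: every subgroup invariant under conjugation by `E(n,R)` is
squeezed between `E(n,I)` and `C(n,I)` for some two-sided ideal `I`. -/
def IsNormalRing : Prop :=
  ∀ G : Subgroup (Matrix (Fin n) (Fin n) R)ˣ,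
    (∀ e ∈ En n R, ∀ g ∈ G, e * g * e⁻¹ ∈ G) →
    ∃ I : TwoSidedIdeal R, EnI n I ≤ G ∧ G ≤ CnI n I

/-- `R` is partially normal: every subgroup invariant under conjugation by `E(n,R)`
containing no non-identity transvection is contained in the center of `GL(n,R)`. -/
def IsPartiallyNormalRing : Prop :=
  ∀ N : Subgroup (Matrix (Fin n) (Fin n) R)ˣ,
    (∀ e ∈ En n R, ∀ g ∈ N, e * g * e⁻¹ ∈ N) →
    (∀ g ∈ N, IsTransvection g → g = 1) →
    N ≤ Subgroup.center _

/-- `R` is stable: both commutator and normal. -/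
def IsStableRing : Prop := IsCommutatorRing n R ∧ IsNormalRing n R

/-- The annihilator `Ann I = {r | rI = Ir = 0}` of a two-sided ideal, as a two-sided ideal. -/
def annIdeal {R : Type*} [Ring R] (I : TwoSidedIdeal R) : TwoSidedIdeal R :=
  TwoSidedIdeal.mk' {r : R | ∀ a ∈ I, r * a = 0 ∧ a * r = 0}
    (fun a _ => ⟨zero_mul a, mul_zero a⟩)
    (fun {x y} hx hy a ha => by
      refine ⟨?_, ?_⟩
      · rw [add_mul, (hx a ha).1, (hy a ha).1, add_zero]
      · rw [mul_add, (hx a ha).2, (hy a ha).2, add_zero])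
    (fun {x} hx a ha => by
      refine ⟨?_, ?_⟩
      · rw [neg_mul, (hx a ha).1, neg_zero]
      · rw [mul_neg, (hx a ha).2, neg_zero])
    (fun {x y} hy a ha => by
      refine ⟨?_, ?_⟩
      · rw [mul_assoc, (hy a ha).1, mul_zero]
      · rw [← mul_assoc]
        exact (hy (a * x) (I.mul_mem_right a x ha)).2)
    (fun {x y} hx a ha => by
      refine ⟨?_, ?_⟩
      · rw [mul_assoc]
        exact (hx (y * a) (I.mul_mem_left y a ha)).1
      · rw [← mul_assoc, (hx a ha).2, zero_mul])

end Defs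

namespace St5

open Matrix

variable {R : Type*} [Ring R] {n : ℕ}


lemma sb_apply (k l : Fin n) (y : R) (a b : Fin n) :
    Matrix.single k l y a b = if k = a ∧ l = b then y else 0 := rfl

lemma sb_neg (k l : Fin n) (y : R) :
    Matrix.single k l (-y) = -Matrix.single k l y := by
  ext a b
  simp only [sb_apply, Matrix.neg_apply]
  split <;> simp

lemma sb_mul_apply (k l : Fin n) (y : R) (M : Matrix (Fin n) (Fin n) R) (a b : Fin n) :
    (Matrix.single k l y * M) a b = if a = k then y * M l b else 0 := by
  rcases eq_or_ne a k with h | h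
  · subst h; simp
  · simp [h]

lemma mul_sb_apply (k l : Fin n) (y : R) (M : Matrix (Fin n) (Fin n) R) (a b : Fin n) :
    (M * Matrix.single k l y) a b = if b = l then M a k * y else 0 := by
  rcases eq_or_ne b l with h | h
  · subst h; simp
  · simp [h]

lemma sb_mul_sb (a b c d : Fin n) (z z' : R) (M : Matrix (Fin n) (Fin n) R) :
    Matrix.single a b z * M * Matrix.single c d z' =
      Matrix.single a d (z * M b c * z') := by
  ext a' d'
  rw [mul_sb_apply, sb_apply]
  rcases eq_or_ne d' d with h2 | h2
  · subst h2
    rw [sb_mul_apply]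
    rcases eq_or_ne a' a with h1 | h1
    · subst h1; simp
    · simp [h1, Ne.symm h1]
  · simp [h2, Ne.symm h2]

lemma exists_third (hn : 3 ≤ n) (a b : Fin n) : ∃ c : Fin n, c ≠ a ∧ c ≠ b := by
  have hcard : ({a, b} : Finset (Fin n)).card ≤ 2 := by
    apply le_trans (Finset.card_insert_le _ _)
    simp
  have hne : (({a, b} : Finset (Fin n))ᶜ).Nonempty := by
    rw [← Finset.card_pos, Finset.card_compl, Fintype.card_fin]
    omega
  obtain ⟨c, hc⟩ := hne
  rw [Finset.mem_compl, Finset.mem_insert, not_or, Finset.mem_singleton] at hc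
  exact ⟨c, hc.1, hc.2⟩

/-- The transvection `t_{cd}(r)` as a unit. -/
def tv (c d : Fin n) (h : c ≠ d) (r : R) : (Matrix (Fin n) (Fin n) R)ˣ where
  val := 1 + Matrix.single c d r
  inv := 1 - Matrix.single c d r
  val_inv := by
    have h0 : Matrix.single c d r * Matrix.single c d r = 0 :=
      Matrix.single_mul_single_of_ne (c := r) c d _ h.symm r
    have : (1 + Matrix.single c d r) * (1 - Matrix.single c d r) =
        1 - Matrix.single c d r * Matrix.single c d r := by noncomm_ring
    rw [this, h0, sub_zero]
  inv_val := by
    have h0 : Matrix.single c d r * Matrix.single c d r = 0 :=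
      Matrix.single_mul_single_of_ne (c := r) c d _ h.symm r
    have : (1 - Matrix.single c d r) * (1 + Matrix.single c d r) =
        1 - Matrix.single c d r * Matrix.single c d r := by noncomm_ring
    rw [this, h0, sub_zero]

@[simp] lemma tv_val (c d : Fin n) (h : c ≠ d) (r : R) :
    (tv c d h r).val = 1 + Matrix.single c d r := rfl

@[simp] lemma tv_inv_val (c d : Fin n) (h : c ≠ d) (r : R) :
    ((tv c d h r)⁻¹).val = 1 - Matrix.single c d r := rfl

lemma tv_mem (c d : Fin n) (h : c ≠ d) (r : R) : tv c d h r ∈ En n R :=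
  Subgroup.subset_closure ⟨c, d, h, r, Set.mem_univ r, rfl⟩

section Extraction

variable (N : Subgroup (Matrix (Fin n) (Fin n) R)ˣ)

lemma kill_tv (hNtv : ∀ g ∈ N, IsTransvection g → g = 1)
    {z : (Matrix (Fin n) (Fin n) R)ˣ} (hz : z ∈ N) {c d : Fin n} (hcd : c ≠ d) {s : R}
    (hval : z.val = 1 + Matrix.single c d s) : s = 0 := by
  have h1 : z = 1 := hNtv z hz ⟨c, d, hcd, s, hval⟩
  have h2 : (1 : Matrix (Fin n) (Fin n) R) + Matrix.single c d s = 1 := by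
    rw [← hval, h1, Units.val_one]
  have h3 := congrFun (congrFun h2 c) d
  simpa [sb_apply, Matrix.one_apply, hcd] using h3

/-- If `1 + E ∈ N` where `E` is supported on row `k` with `E k k = 0`, then `E = 0`. -/
lemma M0 (hn : 3 ≤ n)
    (hNinv : ∀ e ∈ En n R, ∀ g ∈ N, e * g * e⁻¹ ∈ N)
    (hNtv : ∀ g ∈ N, IsTransvection g → g = 1)
    {z : (Matrix (Fin n) (Fin n) R)ˣ} (hz : z ∈ N) {k : Fin n} {E : Matrix (Fin n) (Fin n) R}
    (hval : z.val = 1 + E) (hrow : ∀ a b, a ≠ k → E a b = 0) (hkk : E k k = 0) :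
    E = 0 := by
  have hEE : E * E = 0 := by
    ext a b
    rw [Matrix.mul_apply, Matrix.zero_apply]
    apply Finset.sum_eq_zero
    intro c _
    rcases eq_or_ne a k with ha | ha
    · rcases eq_or_ne c k with hc | hc
      · rw [ha, hc, hkk, zero_mul]
      · rw [hrow c b hc, mul_zero]
    · rw [hrow a c ha, zero_mul]
  have hzinv : (z⁻¹).val = 1 - E := by
    have h1 : z.val * (1 - E) = 1 := by
      rw [hval]
      have : (1 + E) * (1 - E) = 1 - E * E := by noncomm_ring
      rw [this, hEE, sub_zero]
    calc (z⁻¹).val = (z⁻¹).val * (z.val * (1 - E)) := by rw [h1, mul_one]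
    _ = ((z⁻¹).val * z.val) * (1 - E) := by rw [mul_assoc]
    _ = 1 - E := by rw [Units.inv_mul, one_mul]
  have main : ∀ e : Fin n, E k e = 0 := by
    intro e
    obtain ⟨d, hdk, hde⟩ := exists_third hn k e
    have hed : e ≠ d := fun hh => hde hh.symm
    set z' := tv e d hed 1 * z * (tv e d hed 1)⁻¹ with hz'def
    have hz'mem : z' ∈ N := hNinv _ (tv_mem e d hed 1) z hz
    set P := Matrix.single e d (1 : R) with hP
    have hPE : P * E = 0 := by
      ext a b
      rw [hP, sb_mul_apply, Matrix.zero_apply]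
      rcases eq_or_ne a e with h1 | h1
      · rw [if_pos h1, hrow d b hdk, mul_zero]
      · rw [if_neg h1]
    have hPP : P * P = 0 := Matrix.single_mul_single_of_ne (c := 1) e d _ hde 1
    have hEP : E * P = Matrix.single k d (E k e) := by
      ext a b
      rw [hP, mul_sb_apply, sb_apply]
      rcases eq_or_ne b d with h2 | h2
      · rcases eq_or_ne a k with h1 | h1
        · rw [h1, h2]; simp
        · rw [if_pos h2, hrow a e h1, zero_mul, if_neg (fun hc => h1 hc.1.symm)]
      · rw [if_neg h2, if_neg (fun hc => h2 hc.2.symm)]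
    have hz'val : z'.val = 1 + E - E * P := by
      rw [hz'def, Units.val_mul, Units.val_mul, tv_val, tv_inv_val, hval, ← hP]
      have hexp : (1 + P) * (1 + E) * (1 - P) =
          1 + E + P * E - E * P - P * P - P * E * P := by
        noncomm_ring
      rw [hexp, hPE, hPP]
      simp
    have hw'val : (z' * z⁻¹).val = 1 + Matrix.single k d (-(E k e)) := by
      rw [Units.val_mul, hz'val, hzinv]
      have hEPE : E * P * E = 0 := by
        rw [hEP]
        ext a b
        rw [sb_mul_apply, Matrix.zero_apply]
        rcases eq_or_ne a k with h1 | h1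
        · rw [if_pos h1, hrow d b hdk, mul_zero]
        · rw [if_neg h1]
      have hexp : (1 + E - E * P) * (1 - E) =
          1 - E * P - E * E + E * P * E := by noncomm_ring
      rw [hexp, hEE, hEPE, hEP, sb_neg]
      simp [sub_eq_add_neg]
    have : -(E k e) = 0 :=
      kill_tv N hNtv (mul_mem hz'mem (inv_mem hz)) hdk.symm hw'val
    exact neg_eq_zero.mp this
  ext a b
  rcases eq_or_ne a k with h1 | h1
  · rw [h1, Matrix.zero_apply]; exact main b
  · rw [Matrix.zero_apply]; exact hrow a b h1

/-- If `1 + E ∈ N` where `E` is supported on column `m` with `E m m = 0`, then `E = 0`. -/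
lemma M0' (hn : 3 ≤ n)
    (hNinv : ∀ e ∈ En n R, ∀ g ∈ N, e * g * e⁻¹ ∈ N)
    (hNtv : ∀ g ∈ N, IsTransvection g → g = 1)
    {z : (Matrix (Fin n) (Fin n) R)ˣ} (hz : z ∈ N) {m : Fin n} {E : Matrix (Fin n) (Fin n) R}
    (hval : z.val = 1 + E) (hcol : ∀ a b, b ≠ m → E a b = 0) (hmm : E m m = 0) :
    E = 0 := by
  have hEE : E * E = 0 := by
    ext a b
    rw [Matrix.mul_apply, Matrix.zero_apply]
    apply Finset.sum_eq_zero
    intro c _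
    rcases eq_or_ne c m with hc | hc
    · rcases eq_or_ne b m with hb | hb
      · rw [hc, hb, hmm, mul_zero]
      · rw [hcol c b hb, mul_zero]
    · rw [hcol a c hc, zero_mul]
  have hzinv : (z⁻¹).val = 1 - E := by
    have h1 : z.val * (1 - E) = 1 := by
      rw [hval]
      have : (1 + E) * (1 - E) = 1 - E * E := by noncomm_ring
      rw [this, hEE, sub_zero]
    calc (z⁻¹).val = (z⁻¹).val * (z.val * (1 - E)) := by rw [h1, mul_one]
    _ = ((z⁻¹).val * z.val) * (1 - E) := by rw [mul_assoc]
    _ = 1 - E := by rw [Units.inv_mul, one_mul]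
  have main : ∀ e : Fin n, E e m = 0 := by
    intro e
    obtain ⟨c, hcm, hce⟩ := exists_third hn m e
    set z' := tv c e hce 1 * z * (tv c e hce 1)⁻¹ with hz'def
    have hz'mem : z' ∈ N := hNinv _ (tv_mem c e hce 1) z hz
    set P := Matrix.single c e (1 : R) with hP
    have hEP : E * P = 0 := by
      ext a b
      rw [hP, mul_sb_apply, Matrix.zero_apply]
      rcases eq_or_ne b e with h1 | h1
      · rw [if_pos h1, hcol a c hcm, zero_mul]
      · rw [if_neg h1]
    have hPP : P * P = 0 := Matrix.single_mul_single_of_ne (c := 1) c e _ (Ne.symm hce) 1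
    have hPE : P * E = Matrix.single c m (E e m) := by
      ext a b
      rw [hP, sb_mul_apply, sb_apply]
      rcases eq_or_ne a c with h1 | h1
      · rcases eq_or_ne b m with h2 | h2
        · rw [h1, h2]; simp
        · rw [if_pos h1, hcol e b h2, mul_zero, if_neg (fun hc' => h2 hc'.2.symm)]
      · rw [if_neg h1, if_neg (fun hc' => h1 hc'.1.symm)]
    have hz'val : z'.val = 1 + E + P * E := by
      rw [hz'def, Units.val_mul, Units.val_mul, tv_val, tv_inv_val, hval, ← hP]
      have hexp : (1 + P) * (1 + E) * (1 - P) =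
          1 + E + P * E - E * P - P * P - P * E * P := by
        noncomm_ring
      have hPEP : P * E * P = 0 := by
        rw [hPE, hP, Matrix.single_mul_single_of_ne (c := (E e m)) c m _ (Ne.symm hcm) 1]
      rw [hexp, hEP, hPP, hPEP]
      simp
    have hw'val : (z' * z⁻¹).val = 1 + Matrix.single c m (E e m) := by
      rw [Units.val_mul, hz'val, hzinv]
      have hPEE : P * E * E = 0 := by
        rw [hPE]
        ext a b
        rw [sb_mul_apply, Matrix.zero_apply]
        rcases eq_or_ne a c with h1 | h1
        · rw [if_pos h1]
          rcases eq_or_ne b m with h2 | h2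
          · rw [h2, hmm, mul_zero]
          · rw [hcol m b h2, mul_zero]
        · rw [if_neg h1]
      have hexp : (1 + E + P * E) * (1 - E) =
          1 + P * E - E * E - P * E * E := by noncomm_ring
      rw [hexp, hEE, hPEE, hPE]
      simp
    have : E e m = 0 :=
      kill_tv N hNtv (mul_mem hz'mem (inv_mem hz)) hcm hw'val
    exact this
  ext a b
  rcases eq_or_ne b m with h1 | h1
  · rw [h1, Matrix.zero_apply]; exact main a
  · rw [Matrix.zero_apply]; exact hcol a b h1

end Extraction

section Sandwich

lemma sb_mul_sandwich (a b c d : Fin n) (z z' : R) (A B : Matrix (Fin n) (Fin n) R) :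
    Matrix.single a b z * (A * Matrix.single c d z' * B) =
      Matrix.single a d (z * A b c * z') * B := by
  rw [show Matrix.single a b z * (A * Matrix.single c d z' * B) =
      Matrix.single a b z * A * Matrix.single c d z' * B by noncomm_ring, sb_mul_sb]

lemma sandwich_mul_sb (A B : Matrix (Fin n) (Fin n) R) (a b c d : Fin n) (z z' : R) :
    (A * Matrix.single a b z * B) * Matrix.single c d z' =
      A * Matrix.single a d (z * B b c * z') := by
  rw [show (A * Matrix.single a b z * B) * Matrix.single c d z' =
      A * (Matrix.single a b z * B * Matrix.single c d z') by noncomm_ring, sb_mul_sb]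

lemma sbB_mul_sandwich (a b : Fin n) (z : R) (B A' B' : Matrix (Fin n) (Fin n) R)
    (c d : Fin n) (z' : R) :
    (Matrix.single a b z * B) * (A' * Matrix.single c d z' * B') =
      Matrix.single a d (z * (B * A') b c * z') * B' := by
  rw [show (Matrix.single a b z * B) * (A' * Matrix.single c d z' * B') =
      Matrix.single a b z * (B * A') * Matrix.single c d z' * B' by noncomm_ring, sb_mul_sb]

lemma Asb_mul_sandwich (A : Matrix (Fin n) (Fin n) R) (a b : Fin n) (z : R)
    (A' B' : Matrix (Fin n) (Fin n) R) (c d : Fin n) (z' : R) :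
    (A * Matrix.single a b z) * (A' * Matrix.single c d z' * B') =
      A * Matrix.single a d (z * A' b c * z') * B' := by
  rw [show (A * Matrix.single a b z) * (A' * Matrix.single c d z' * B') =
      A * (Matrix.single a b z * A' * Matrix.single c d z') * B' by noncomm_ring, sb_mul_sb]

lemma sandwich_mul_sandwich (A B A' B' : Matrix (Fin n) (Fin n) R) (a b c d : Fin n) (z z' : R) :
    (A * Matrix.single a b z * B) * (A' * Matrix.single c d z' * B') =
      A * Matrix.single a d (z * (B * A') b c * z') * B' := by
  rw [show (A * Matrix.single a b z * B) * (A' * Matrix.single c d z' * B') =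
      A * (Matrix.single a b z * (B * A') * Matrix.single c d z') * B' by noncomm_ring,
    sb_mul_sb]

lemma Asb_mul_sb (A : Matrix (Fin n) (Fin n) R) (a b c d : Fin n) (z z' : R) :
    A * Matrix.single a b z * Matrix.single c d z' =
      A * (Matrix.single a b z * Matrix.single c d z') := mul_assoc _ _ _

lemma sandwich_apply (A B : Matrix (Fin n) (Fin n) R) (i j : Fin n) (x : R) (a b : Fin n) :
    (A * Matrix.single i j x * B) a b = A a i * x * B j b := by
  calc (A * Matrix.single i j x * B) a b
      = ∑ cx, (A * Matrix.single i j x) a cx * B cx b := Matrix.mul_apply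
    _ = ∑ cx, (if cx = j then A a i * x else 0) * B cx b := by
        refine Finset.sum_congr rfl fun cx _ => ?_
        rw [mul_sb_apply]
    _ = A a i * x * B j b := by simp [ite_mul, Finset.sum_ite_eq']

lemma conj_expand (P E : Matrix (Fin n) (Fin n) R) :
    (1 + P) * (1 + E) * (1 - P) = 1 + E + P * E - E * P - P * P - P * E * P := by
  noncomm_ring

lemma mul_one_add (X Y : Matrix (Fin n) (Fin n) R) :
    (1 + X) * (1 + Y) = 1 + X + Y + X * Y := by noncomm_ring

end Sandwich

section Master

variable (N : Subgroup (Matrix (Fin n) (Fin n) R)ˣ)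

/-- Master lemma 1: if `y * (G⁻¹) l m = 0` for some `m ∉ {k,l}`, then
`G l k * y = 0`, `G k k * y = y * G l l`, and `y * G l t = 0` for all `t ≠ l`. -/
lemma MW1 (hn : 3 ≤ n)
    (hNinv : ∀ e ∈ En n R, ∀ g ∈ N, e * g * e⁻¹ ∈ N)
    (hNtv : ∀ g ∈ N, IsTransvection g → g = 1)
    {G : (Matrix (Fin n) (Fin n) R)ˣ} (hG : G ∈ N)
    {k l m : Fin n} (hkl : k ≠ l) (hmk : m ≠ k) (hml : m ≠ l)
    {y : R} (hy : y * (G⁻¹).val l m = 0) :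
    (G.val l k * y = 0) ∧ (G.val k k * y = y * G.val l l) ∧
      (∀ t, t ≠ l → y * G.val l t = 0) := by
  set A := G.val with hA
  set B := (G⁻¹).val with hB
  have hBA : B * A = 1 := Units.inv_mul G
  have hAB : A * B = 1 := Units.mul_inv G
  set u1 := tv k l hkl y with hu1
  set γ := G * u1 * G⁻¹ with hγ
  set φ := G * u1 * G⁻¹ * u1⁻¹ with hφ
  have hφmem : φ ∈ N := by
    have h1 : u1 * G⁻¹ * u1⁻¹ ∈ N := hNinv u1 (tv_mem k l hkl y) G⁻¹ (inv_mem hG)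
    have h2 : φ = G * (u1 * G⁻¹ * u1⁻¹) := by rw [hφ]; group
    rw [h2]; exact mul_mem hG h1
  have hγφ : γ = φ * u1 := by rw [hγ, hφ]; group
  set W := A * Matrix.single k l y * B with hW
  have hγval : γ.val = 1 + W := by
    rw [hγ, Units.val_mul, Units.val_mul, tv_val, ← hA, ← hB, hW,
      mul_add, mul_one, add_mul, hAB]
  have hγinvval : (γ⁻¹).val = 1 - W := by
    have h' : γ⁻¹ = G * u1⁻¹ * G⁻¹ := by rw [hγ]; group
    rw [h', Units.val_mul, Units.val_mul, tv_inv_val, ← hA, ← hB, hW,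
      mul_sub, mul_one, sub_mul, hAB]
  have hWW : W * W = 0 := by
    rw [hW, sandwich_mul_sandwich, hBA, Matrix.one_apply_ne (Ne.symm hkl),
      mul_zero, zero_mul, Matrix.single_zero, mul_zero, zero_mul]
  -- ♣ : A k k * y * B l b = if l = b then y else 0
  have hclub : ∀ b, A k k * y * B l b = if l = b then y else 0 := by
    have E1 : tv m k hmk (1:R) * u1 * (tv m k hmk (1:R))⁻¹ = u1 * tv m l hml y := by
      apply Units.ext
      rw [Units.val_mul, Units.val_mul, Units.val_mul, hu1, tv_val, tv_val, tv_val,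
        tv_inv_val, conj_expand, mul_one_add,
        Matrix.single_mul_single_same, one_mul,
        Matrix.single_mul_single_of_ne (c := y) k l _ (Ne.symm hml) 1,
        Matrix.single_mul_single_of_ne (c := 1) m k _ (Ne.symm hmk) 1,
        Matrix.single_mul_single_of_ne (c := y) m l _ (Ne.symm hml) 1,
        Matrix.single_mul_single_of_ne (c := y) k l _ (Ne.symm hml) y]
      simp
    have E2 : u1 * tv m l hml y = tv m l hml y * u1 := by
      apply Units.ext
      rw [Units.val_mul, Units.val_mul, hu1, tv_val, tv_val, mul_one_add, mul_one_add,
        Matrix.single_mul_single_of_ne (c := y) k l _ (Ne.symm hml) y,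
        Matrix.single_mul_single_of_ne (c := y) m l _ (Ne.symm hkl) y]
      abel
    set εu := tv m k hmk (1:R) * γ * (tv m k hmk (1:R))⁻¹ * γ⁻¹ * (tv m l hml y)⁻¹ with hεu
    have hεmem : εu ∈ N := by
      have key : εu = (tv m k hmk (1:R) * φ * (tv m k hmk (1:R))⁻¹) *
          (tv m l hml y * φ⁻¹ * (tv m l hml y)⁻¹) := by
        rw [hεu, hγφ]
        calc tv m k hmk (1:R) * (φ * u1) * (tv m k hmk (1:R))⁻¹ * (φ * u1)⁻¹ *
              (tv m l hml y)⁻¹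
            = (tv m k hmk (1:R) * φ * (tv m k hmk (1:R))⁻¹) *
              (tv m k hmk (1:R) * u1 * (tv m k hmk (1:R))⁻¹) * u1⁻¹ * φ⁻¹ *
              (tv m l hml y)⁻¹ := by group
          _ = (tv m k hmk (1:R) * φ * (tv m k hmk (1:R))⁻¹) * (u1 * tv m l hml y) * u1⁻¹ *
              φ⁻¹ * (tv m l hml y)⁻¹ := by rw [E1]
          _ = (tv m k hmk (1:R) * φ * (tv m k hmk (1:R))⁻¹) * (tv m l hml y * u1) * u1⁻¹ *
              φ⁻¹ * (tv m l hml y)⁻¹ := by rw [E2]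
          _ = (tv m k hmk (1:R) * φ * (tv m k hmk (1:R))⁻¹) *
              (tv m l hml y * φ⁻¹ * (tv m l hml y)⁻¹) := by group
      rw [key]
      exact mul_mem (hNinv _ (tv_mem _ _ _ _) φ hφmem)
        (hNinv _ (tv_mem _ _ _ _) φ⁻¹ (inv_mem hφmem))
    set V := Matrix.single m l (A k k * y) * B with hV
    have hPW : Matrix.single m k (1:R) * W = V := by
      rw [hW, hV, sb_mul_sandwich, one_mul]
    have hWP : W * Matrix.single m k (1:R) = 0 := by
      rw [hW, sandwich_mul_sb, mul_one, hy, Matrix.single_zero, mul_zero]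
    have hVP : V * Matrix.single m k (1:R) = 0 := by
      rw [hV, sb_mul_sb, mul_one, mul_assoc (A k k) y (B l m), hy, mul_zero, Matrix.single_zero]
    have hVW : V * W = 0 := by
      rw [hV, hW, sbB_mul_sandwich, hBA, Matrix.one_apply_ne (Ne.symm hkl),
        mul_zero, zero_mul, Matrix.single_zero, zero_mul]
    have hVS : V * Matrix.single m l y = 0 := by
      rw [hV, sb_mul_sb, mul_assoc (A k k) y (B l m), hy, mul_zero, zero_mul, Matrix.single_zero]
    have hεval : εu.val = 1 + (V - Matrix.single m l y) := by
      rw [hεu, Units.val_mul, Units.val_mul, Units.val_mul, Units.val_mul,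
        tv_val, tv_inv_val, tv_inv_val, hγval, hγinvval]
      rw [conj_expand, hPW, hWP, hVP,
        Matrix.single_mul_single_of_ne (c := 1) m k _ (Ne.symm hmk) 1]
      rw [show (1 : Matrix (Fin n) (Fin n) R) + W + V - 0 - 0 - 0 = 1 + W + V by abel]
      rw [show ((1 : Matrix (Fin n) (Fin n) R) + W + V) * (1 - W) =
        1 + V + (W - W) - W * W - V * W by noncomm_ring, hWW, hVW]
      rw [show (1 : Matrix (Fin n) (Fin n) R) + V + (W - W) - 0 - 0 = 1 + V by abel]
      rw [show ((1 : Matrix (Fin n) (Fin n) R) + V) * (1 - Matrix.single m l y) =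
        1 + (V - Matrix.single m l y) - V * Matrix.single m l y by noncomm_ring, hVS]
      abel
    have hEsupp : ∀ a b, a ≠ m → (V - Matrix.single m l y) a b = 0 := by
      intro a b ha
      rw [Matrix.sub_apply, hV, sb_mul_apply, if_neg ha, sb_apply,
        if_neg (fun hc => ha hc.1.symm), sub_zero]
    have hEmm : (V - Matrix.single m l y) m m = 0 := by
      rw [Matrix.sub_apply, hV, sb_mul_apply, if_pos rfl, sb_apply,
        if_neg (fun hc => hml hc.2.symm), mul_assoc (A k k) y (B l m), hy, mul_zero, sub_zero]
    have hE0 := M0 N hn hNinv hNtv hεmem hεval hEsupp hEmm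
    intro b
    have h0 := congrFun (congrFun hE0 m) b
    rw [Matrix.sub_apply, Matrix.zero_apply, hV, sb_mul_apply, if_pos rfl, sb_apply,
      sub_eq_zero] at h0
    rw [mul_assoc] at h0 ⊢
    rw [h0]
    simp
  -- ♠ : A l k * y * B l b = 0
  have hspade : ∀ b, A l k * y * B l b = 0 := by
    have E3 : u1 * tv m l hml (1:R) = tv m l hml (1:R) * u1 := by
      apply Units.ext
      rw [Units.val_mul, Units.val_mul, hu1, tv_val, tv_val, mul_one_add, mul_one_add,
        Matrix.single_mul_single_of_ne (c := y) k l _ (Ne.symm hml) 1,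
        Matrix.single_mul_single_of_ne (c := 1) m l _ (Ne.symm hkl) y]
      abel
    set ρu := γ * tv m l hml (1:R) * γ⁻¹ * (tv m l hml (1:R))⁻¹ with hρu
    have hρmem : ρu ∈ N := by
      have key : ρu = φ * (tv m l hml (1:R) * φ⁻¹ * (tv m l hml (1:R))⁻¹) := by
        rw [hρu, hγφ]
        calc φ * u1 * tv m l hml (1:R) * (φ * u1)⁻¹ * (tv m l hml (1:R))⁻¹
            = φ * (u1 * tv m l hml (1:R)) * u1⁻¹ * φ⁻¹ * (tv m l hml (1:R))⁻¹ := by group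
          _ = φ * (tv m l hml (1:R) * u1) * u1⁻¹ * φ⁻¹ * (tv m l hml (1:R))⁻¹ := by rw [E3]
          _ = φ * (tv m l hml (1:R) * φ⁻¹ * (tv m l hml (1:R))⁻¹) := by group
      rw [key]
      exact mul_mem hφmem (hNinv _ (tv_mem _ _ _ _) φ⁻¹ (inv_mem hφmem))
    set V2 := Matrix.single m l (A l k * y) * B with hV2
    have hWT : W * Matrix.single m l (1:R) = 0 := by
      rw [hW, sandwich_mul_sb, hy, zero_mul, Matrix.single_zero, mul_zero]
    have hTW : Matrix.single m l (1:R) * W = V2 := by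
      rw [hW, hV2, sb_mul_sandwich, one_mul]
    have hV2T : V2 * Matrix.single m l (1:R) = 0 := by
      rw [hV2, sb_mul_sb, mul_one, mul_assoc (A l k) y (B l m), hy, mul_zero, Matrix.single_zero]
    have hρval : ρu.val = 1 + -V2 := by
      rw [hρu, Units.val_mul, Units.val_mul, Units.val_mul,
        tv_val, tv_inv_val, hγval, hγinvval]
      rw [show (1 + W) * (1 + Matrix.single m l (1:R)) * (1 - W) =
        (1 + Matrix.single m l (1:R)) + W * Matrix.single m l (1:R) -
          Matrix.single m l (1:R) * W + (W - W) - W * W -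
          W * Matrix.single m l (1:R) * W by noncomm_ring, hWT, hTW, hWW]
      rw [show (1 : Matrix (Fin n) (Fin n) R) + Matrix.single m l (1:R) + 0 - V2 +
        (W - W) - 0 - 0 * W = 1 + Matrix.single m l (1:R) - V2 by
          rw [zero_mul]; abel]
      rw [show ((1 : Matrix (Fin n) (Fin n) R) + Matrix.single m l (1:R) - V2) *
        (1 - Matrix.single m l (1:R)) = 1 + -V2 +
          (Matrix.single m l (1:R) - Matrix.single m l (1:R)) -
          Matrix.single m l (1:R) * Matrix.single m l (1:R) +
          V2 * Matrix.single m l (1:R) by noncomm_ring, hV2T,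
        Matrix.single_mul_single_of_ne (c := 1) m l _ (Ne.symm hml) 1]
      abel
    have hEsupp : ∀ a b, a ≠ m → (-V2) a b = 0 := by
      intro a b ha
      rw [Matrix.neg_apply, hV2, sb_mul_apply, if_neg ha, neg_zero]
    have hEmm : (-V2) m m = 0 := by
      rw [Matrix.neg_apply, hV2, sb_mul_apply, if_pos rfl, mul_assoc (A l k) y (B l m), hy, mul_zero,
        neg_zero]
    have hE0 := M0 N hn hNinv hNtv hρmem hρval hEsupp hEmm
    intro b
    have h0 := congrFun (congrFun hE0 m) b
    rw [Matrix.neg_apply, Matrix.zero_apply, hV2, sb_mul_apply, if_pos rfl,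
      neg_eq_zero] at h0
    rw [mul_assoc] at h0 ⊢
    exact h0
  refine ⟨?_, ?_, ?_⟩
  · have h1 : A l k * y * ((B * A) l l) = A l k * y := by
      rw [hBA, Matrix.one_apply_eq, mul_one]
    rw [← h1, Matrix.mul_apply, Finset.mul_sum]
    refine Finset.sum_eq_zero fun b _ => ?_
    rw [← mul_assoc, hspade b, zero_mul]
  · have hgen : A k k * y * ((B * A) l l) = y * A l l := by
      rw [Matrix.mul_apply, Finset.mul_sum]
      calc ∑ b, A k k * y * (B l b * A b l)
          = ∑ b, (if l = b then y else 0) * A b l := by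
            refine Finset.sum_congr rfl fun b _ => ?_
            rw [← mul_assoc, hclub b]
        _ = y * A l l := by simp [ite_mul, Finset.sum_ite_eq]
    rw [hBA, Matrix.one_apply_eq, mul_one] at hgen
    exact hgen
  · intro t ht
    have hgen : A k k * y * ((B * A) l t) = y * A l t := by
      rw [Matrix.mul_apply, Finset.mul_sum]
      calc ∑ b, A k k * y * (B l b * A b t)
          = ∑ b, (if l = b then y else 0) * A b t := by
            refine Finset.sum_congr rfl fun b _ => ?_
            rw [← mul_assoc, hclub b]
        _ = y * A l t := by simp [ite_mul, Finset.sum_ite_eq]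
    rw [hBA, Matrix.one_apply_ne (Ne.symm ht), mul_zero] at hgen
    exact hgen.symm

/-- Master lemma 2: if `G m k * y = 0` for some `m ∉ {k,l}`, then
`(G⁻¹) s k * y = 0` for `s ≠ k`, `(G⁻¹) k k * y = y * (G⁻¹) l l`, and `y * (G⁻¹) l k = 0`. -/
lemma MW2 (hn : 3 ≤ n)
    (hNinv : ∀ e ∈ En n R, ∀ g ∈ N, e * g * e⁻¹ ∈ N)
    (hNtv : ∀ g ∈ N, IsTransvection g → g = 1)
    {G : (Matrix (Fin n) (Fin n) R)ˣ} (hG : G ∈ N)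
    {k l m : Fin n} (hkl : k ≠ l) (hmk : m ≠ k) (hml : m ≠ l)
    {y : R} (hy : G.val m k * y = 0) :
    (∀ s, s ≠ k → (G⁻¹).val s k * y = 0) ∧
      ((G⁻¹).val k k * y = y * (G⁻¹).val l l) ∧ (y * (G⁻¹).val l k = 0) := by
  set A := G.val with hA
  set B := (G⁻¹).val with hB
  have hBA : B * A = 1 := Units.inv_mul G
  have hAB : A * B = 1 := Units.mul_inv G
  set u1 := tv k l hkl y with hu1
  set γ := G * u1 * G⁻¹ with hγ
  set φ := G * u1 * G⁻¹ * u1⁻¹ with hφ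
  have hφmem : φ ∈ N := by
    have h1 : u1 * G⁻¹ * u1⁻¹ ∈ N := hNinv u1 (tv_mem k l hkl y) G⁻¹ (inv_mem hG)
    have h2 : φ = G * (u1 * G⁻¹ * u1⁻¹) := by rw [hφ]; group
    rw [h2]; exact mul_mem hG h1
  have hγφ : γ = φ * u1 := by rw [hγ, hφ]; group
  set W := A * Matrix.single k l y * B with hW
  have hγval : γ.val = 1 + W := by
    rw [hγ, Units.val_mul, Units.val_mul, tv_val, ← hA, ← hB, hW,
      mul_add, mul_one, add_mul, hAB]
  have hγinvval : (γ⁻¹).val = 1 - W := by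
    have h' : γ⁻¹ = G * u1⁻¹ * G⁻¹ := by rw [hγ]; group
    rw [h', Units.val_mul, Units.val_mul, tv_inv_val, ← hA, ← hB, hW,
      mul_sub, mul_one, sub_mul, hAB]
  have hWW : W * W = 0 := by
    rw [hW, sandwich_mul_sandwich, hBA, Matrix.one_apply_ne (Ne.symm hkl),
      mul_zero, zero_mul, Matrix.single_zero, mul_zero, zero_mul]
  -- ♦ : A a k * (y * B l l) = if k = a then y else 0
  have hdiam : ∀ a, A a k * (y * B l l) = if k = a then y else 0 := by
    have E4 : u1 * tv l m (Ne.symm hml) (1:R) * u1⁻¹ =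
        tv l m (Ne.symm hml) (1:R) * tv k m (Ne.symm hmk) y := by
      apply Units.ext
      rw [Units.val_mul, Units.val_mul, Units.val_mul, hu1, tv_val, tv_val, tv_val,
        tv_inv_val, conj_expand, mul_one_add,
        Matrix.single_mul_single_same,
        Matrix.single_mul_single_of_ne (c := 1) l m _ hmk y,
        Matrix.single_mul_single_of_ne (c := y) k l _ (Ne.symm hkl) y,
        Matrix.single_mul_single_of_ne (c := (y * 1)) k m _ hmk y,
        Matrix.single_mul_single_of_ne (c := 1) l m _ hmk y]
      simp
    have E5 : tv l m (Ne.symm hml) (1:R) * tv k m (Ne.symm hmk) y =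
        tv k m (Ne.symm hmk) y * tv l m (Ne.symm hml) (1:R) := by
      apply Units.ext
      rw [Units.val_mul, Units.val_mul, tv_val, tv_val, mul_one_add, mul_one_add,
        Matrix.single_mul_single_of_ne (c := 1) l m _ hmk y,
        Matrix.single_mul_single_of_ne (c := y) k m _ hml 1]
      abel
    set ε2 := γ * tv l m (Ne.symm hml) (1:R) * γ⁻¹ * (tv k m (Ne.symm hmk) y)⁻¹ *
      (tv l m (Ne.symm hml) (1:R))⁻¹ with hε2
    have hεmem : ε2 ∈ N := by
      have key : ε2 = φ *
          ((tv l m (Ne.symm hml) (1:R) * tv k m (Ne.symm hmk) y) * φ⁻¹ *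
            (tv l m (Ne.symm hml) (1:R) * tv k m (Ne.symm hmk) y)⁻¹) := by
        rw [hε2, hγφ]
        calc φ * u1 * tv l m (Ne.symm hml) (1:R) * (φ * u1)⁻¹ *
              (tv k m (Ne.symm hmk) y)⁻¹ * (tv l m (Ne.symm hml) (1:R))⁻¹
            = φ * (u1 * tv l m (Ne.symm hml) (1:R) * u1⁻¹) * φ⁻¹ *
              (tv k m (Ne.symm hmk) y)⁻¹ * (tv l m (Ne.symm hml) (1:R))⁻¹ := by group
          _ = φ * (tv l m (Ne.symm hml) (1:R) * tv k m (Ne.symm hmk) y) * φ⁻¹ *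
              (tv k m (Ne.symm hmk) y)⁻¹ * (tv l m (Ne.symm hml) (1:R))⁻¹ := by rw [E4]
          _ = φ * ((tv l m (Ne.symm hml) (1:R) * tv k m (Ne.symm hmk) y) * φ⁻¹ *
              (tv l m (Ne.symm hml) (1:R) * tv k m (Ne.symm hmk) y)⁻¹) := by group
      rw [key]
      exact mul_mem hφmem (hNinv _ (mul_mem (tv_mem _ _ _ _) (tv_mem _ _ _ _)) φ⁻¹
        (inv_mem hφmem))
    set V3 := A * Matrix.single k m (y * B l l) with hV3
    have hWS2 : W * Matrix.single l m (1:R) = V3 := by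
      rw [hW, hV3, sandwich_mul_sb, mul_one]
    have hS2W : Matrix.single l m (1:R) * W = 0 := by
      rw [hW, sb_mul_sandwich, one_mul, hy, Matrix.single_zero, zero_mul]
    have hV3W : V3 * W = 0 := by
      rw [hV3, hW, Asb_mul_sandwich, mul_assoc (y * B l l) (A m k) y, hy, mul_zero,
        Matrix.single_zero, mul_zero, zero_mul]
    have hS2K : Matrix.single l m (1:R) * Matrix.single k m y = 0 :=
      Matrix.single_mul_single_of_ne (c := 1) l m _ hmk y
    have hV3K : V3 * Matrix.single k m y = 0 := by
      rw [hV3, Asb_mul_sb, Matrix.single_mul_single_of_ne (c := (y * B l l)) k m _ hmk y, mul_zero]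
    have hS2S2 : Matrix.single l m (1:R) * Matrix.single l m (1:R) = 0 :=
      Matrix.single_mul_single_of_ne (c := 1) l m _ hml 1
    have hV3S2 : V3 * Matrix.single l m (1:R) = 0 := by
      rw [hV3, Asb_mul_sb, Matrix.single_mul_single_of_ne (c := (y * B l l)) k m _ hml 1, mul_zero]
    have hKS2 : Matrix.single k m y * Matrix.single l m (1:R) = 0 :=
      Matrix.single_mul_single_of_ne (c := y) k m _ hml 1
    have hεval : ε2.val = 1 + (V3 - Matrix.single k m y) := by
      rw [hε2, Units.val_mul, Units.val_mul, Units.val_mul, Units.val_mul,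
        tv_val, tv_inv_val, tv_inv_val, hγval, hγinvval]
      rw [conj_expand, hWS2, hS2W, hV3W, hWW]
      rw [show (1 : Matrix (Fin n) (Fin n) R) + Matrix.single l m (1:R) + V3 - 0 - 0 - 0 =
        1 + Matrix.single l m (1:R) + V3 by abel]
      rw [show ((1 : Matrix (Fin n) (Fin n) R) + Matrix.single l m (1:R) + V3) *
        (1 - Matrix.single k m y) = 1 + Matrix.single l m (1:R) + V3 -
          Matrix.single k m y - Matrix.single l m (1:R) * Matrix.single k m y -
          V3 * Matrix.single k m y by noncomm_ring, hS2K, hV3K]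
      rw [show (1 : Matrix (Fin n) (Fin n) R) + Matrix.single l m (1:R) + V3 -
        Matrix.single k m y - 0 - 0 =
        1 + Matrix.single l m (1:R) + V3 - Matrix.single k m y by abel]
      rw [show ((1 : Matrix (Fin n) (Fin n) R) + Matrix.single l m (1:R) + V3 -
        Matrix.single k m y) * (1 - Matrix.single l m (1:R)) =
        1 + (V3 - Matrix.single k m y) +
          (Matrix.single l m (1:R) - Matrix.single l m (1:R)) -
          Matrix.single l m (1:R) * Matrix.single l m (1:R) -
          V3 * Matrix.single l m (1:R) +
          Matrix.single k m y * Matrix.single l m (1:R) by noncomm_ring,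
        hS2S2, hV3S2, hKS2]
      abel
    have hEsupp : ∀ a b, b ≠ m → (V3 - Matrix.single k m y) a b = 0 := by
      intro a b hb
      rw [Matrix.sub_apply, hV3, mul_sb_apply, if_neg hb, sb_apply,
        if_neg (fun hc => hb hc.2.symm), sub_zero]
    have hEmm : (V3 - Matrix.single k m y) m m = 0 := by
      rw [Matrix.sub_apply, hV3, mul_sb_apply, if_pos rfl, sb_apply,
        if_neg (fun hc => hmk hc.1.symm), ← mul_assoc, hy, zero_mul, sub_zero]
    have hE0 := M0' N hn hNinv hNtv hεmem hεval hEsupp hEmm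
    intro a
    have h0 := congrFun (congrFun hE0 a) m
    rw [Matrix.sub_apply, Matrix.zero_apply, hV3, mul_sb_apply, if_pos rfl, sb_apply,
      sub_eq_zero] at h0
    simpa using h0
  -- ♥ : A a k * (y * B l k) = 0
  have hheart : ∀ a, A a k * (y * B l k) = 0 := by
    have E6 : u1 * tv k m (Ne.symm hmk) (1:R) = tv k m (Ne.symm hmk) (1:R) * u1 := by
      apply Units.ext
      rw [Units.val_mul, Units.val_mul, hu1, tv_val, tv_val, mul_one_add, mul_one_add,
        Matrix.single_mul_single_of_ne (c := y) k l _ (Ne.symm hkl) 1,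
        Matrix.single_mul_single_of_ne (c := 1) k m _ hmk y]
      abel
    set ρ2 := γ * tv k m (Ne.symm hmk) (1:R) * γ⁻¹ * (tv k m (Ne.symm hmk) (1:R))⁻¹
      with hρ2
    have hρmem : ρ2 ∈ N := by
      have key : ρ2 = φ * (tv k m (Ne.symm hmk) (1:R) * φ⁻¹ *
          (tv k m (Ne.symm hmk) (1:R))⁻¹) := by
        rw [hρ2, hγφ]
        calc φ * u1 * tv k m (Ne.symm hmk) (1:R) * (φ * u1)⁻¹ *
              (tv k m (Ne.symm hmk) (1:R))⁻¹
            = φ * (u1 * tv k m (Ne.symm hmk) (1:R)) * u1⁻¹ * φ⁻¹ *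
              (tv k m (Ne.symm hmk) (1:R))⁻¹ := by group
          _ = φ * (tv k m (Ne.symm hmk) (1:R) * u1) * u1⁻¹ * φ⁻¹ *
              (tv k m (Ne.symm hmk) (1:R))⁻¹ := by rw [E6]
          _ = φ * (tv k m (Ne.symm hmk) (1:R) * φ⁻¹ *
              (tv k m (Ne.symm hmk) (1:R))⁻¹) := by group
      rw [key]
      exact mul_mem hφmem (hNinv _ (tv_mem _ _ _ _) φ⁻¹ (inv_mem hφmem))
    set V4 := A * Matrix.single k m (y * B l k) with hV4
    have hWT4 : W * Matrix.single k m (1:R) = V4 := by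
      rw [hW, hV4, sandwich_mul_sb, mul_one]
    have hT4W : Matrix.single k m (1:R) * W = 0 := by
      rw [hW, sb_mul_sandwich, one_mul, hy, Matrix.single_zero, zero_mul]
    have hV4W : V4 * W = 0 := by
      rw [hV4, hW, Asb_mul_sandwich, mul_assoc (y * B l k) (A m k) y, hy, mul_zero,
        Matrix.single_zero, mul_zero, zero_mul]
    have hT4T4 : Matrix.single k m (1:R) * Matrix.single k m (1:R) = 0 :=
      Matrix.single_mul_single_of_ne (c := 1) k m _ hmk 1
    have hV4T4 : V4 * Matrix.single k m (1:R) = 0 := by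
      rw [hV4, Asb_mul_sb, Matrix.single_mul_single_of_ne (c := (y * B l k)) k m _ hmk 1, mul_zero]
    have hρval : ρ2.val = 1 + V4 := by
      rw [hρ2, Units.val_mul, Units.val_mul, Units.val_mul,
        tv_val, tv_inv_val, hγval, hγinvval]
      rw [conj_expand, hWT4, hT4W, hV4W, hWW]
      rw [show (1 : Matrix (Fin n) (Fin n) R) + Matrix.single k m (1:R) + V4 - 0 - 0 - 0 =
        1 + Matrix.single k m (1:R) + V4 by abel]
      rw [show ((1 : Matrix (Fin n) (Fin n) R) + Matrix.single k m (1:R) + V4) *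
        (1 - Matrix.single k m (1:R)) = 1 + V4 +
          (Matrix.single k m (1:R) - Matrix.single k m (1:R)) -
          Matrix.single k m (1:R) * Matrix.single k m (1:R) -
          V4 * Matrix.single k m (1:R) by noncomm_ring, hT4T4, hV4T4]
      abel
    have hEsupp : ∀ a b, b ≠ m → V4 a b = 0 := by
      intro a b hb
      rw [hV4, mul_sb_apply, if_neg hb]
    have hEmm : V4 m m = 0 := by
      rw [hV4, mul_sb_apply, if_pos rfl, ← mul_assoc, hy, zero_mul]
    have hE0 := M0' N hn hNinv hNtv hρmem hρval hEsupp hEmm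
    intro a
    have h0 := congrFun (congrFun hE0 a) m
    rw [Matrix.zero_apply, hV4, mul_sb_apply, if_pos rfl] at h0
    exact h0
  refine ⟨?_, ?_, ?_⟩
  · intro s hs
    have hgen : (B * A) s k * (y * B l l) = B s k * y := by
      rw [Matrix.mul_apply, Finset.sum_mul]
      calc ∑ a, B s a * A a k * (y * B l l)
          = ∑ a, B s a * (if k = a then y else 0) := by
            refine Finset.sum_congr rfl fun a _ => ?_
            rw [mul_assoc, hdiam a]
        _ = B s k * y := by simp [mul_ite, Finset.sum_ite_eq]
    rw [hBA, Matrix.one_apply_ne hs, zero_mul] at hgen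
    exact hgen.symm
  · have hgen : (B * A) k k * (y * B l l) = B k k * y := by
      rw [Matrix.mul_apply, Finset.sum_mul]
      calc ∑ a, B k a * A a k * (y * B l l)
          = ∑ a, B k a * (if k = a then y else 0) := by
            refine Finset.sum_congr rfl fun a _ => ?_
            rw [mul_assoc, hdiam a]
        _ = B k k * y := by simp [mul_ite, Finset.sum_ite_eq]
    rw [hBA, Matrix.one_apply_eq, one_mul] at hgen
    exact hgen.symm
  · have hgen : (B * A) k k * (y * B l k) = 0 := by
      rw [Matrix.mul_apply, Finset.sum_mul]
      refine Finset.sum_eq_zero fun a _ => ?_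
      rw [mul_assoc, hheart a, mul_zero]
    rw [hBA, Matrix.one_apply_eq, one_mul] at hgen
    exact hgen

/-- Stage A: an element of `N` with a zero off-diagonal entry is diagonal,
with all diagonal entries equal and central. -/
lemma stageA (hn : 3 ≤ n)
    (hNinv : ∀ e ∈ En n R, ∀ g ∈ N, e * g * e⁻¹ ∈ N)
    (hNtv : ∀ g ∈ N, IsTransvection g → g = 1)
    {h : (Matrix (Fin n) (Fin n) R)ˣ} (hh : h ∈ N)
    {p q : Fin n} (hpq : p ≠ q) (hzero : h.val p q = 0) :
    (∀ a b, a ≠ b → h.val a b = 0) ∧ (∀ k l (y : R), h.val k k * y = y * h.val l l) := by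
  obtain ⟨d, hdp, hdq⟩ := exists_third hn p q
  have hA : ∀ s, s ≠ q → (h⁻¹).val s q = 0 := by
    intro s hs
    have := (MW2 N hn hNinv hNtv hh (Ne.symm hdq) hpq (Ne.symm hdp)
      (show h.val p q * (1 : R) = 0 by rw [hzero, zero_mul])).1 s hs
    rwa [mul_one] at this
  have hrow : ∀ s t, s ≠ q → t ≠ s → h.val s t = 0 := by
    intro s t hs hts
    obtain ⟨k1, hk1s, hk1q⟩ := exists_third hn s q
    have := (MW1 N hn hNinv hNtv hh hk1s (Ne.symm hk1q) (Ne.symm hs)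
      (show (1:R) * (h⁻¹).val s q = 0 by rw [hA s hs, mul_zero])).2.2 t hts
    rwa [one_mul] at this
  have hBfull : ∀ a b, a ≠ b → (h⁻¹).val a b = 0 := by
    intro a b hab
    rcases eq_or_ne b q with rfl | hbq
    · exact hA a hab
    · obtain ⟨s0, hs0b, hs0q⟩ := exists_third hn b q
      have := (MW2 N hn hNinv hNtv hh hbq hs0b hs0q
        (show h.val s0 b * (1:R) = 0 by
          rw [hrow s0 b hs0q (Ne.symm hs0b), zero_mul])).1 a hab
      rwa [mul_one] at this
  have hAfull : ∀ a b, a ≠ b → h.val a b = 0 := by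
    intro a b hab
    obtain ⟨s1, hs1b, hs1a⟩ := exists_third hn b a
    have h3 := (MW2 N hn hNinv hNtv (inv_mem hh) (Ne.symm hab) hs1b hs1a
      (show (h⁻¹).val s1 b * (1:R) = 0 by rw [hBfull s1 b hs1b, zero_mul])).2.2
    rw [inv_inv] at h3
    rwa [one_mul] at h3
  have hDfull : ∀ k l (y : R), k ≠ l → h.val k k * y = y * h.val l l := by
    intro k l y hkl
    obtain ⟨s1, hs1k, hs1l⟩ := exists_third hn k l
    have h3 := (MW2 N hn hNinv hNtv (inv_mem hh) hkl hs1k hs1l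
      (show (h⁻¹).val s1 k * y = 0 by rw [hBfull s1 k hs1k, zero_mul])).2.1
    rwa [inv_inv] at h3
  refine ⟨hAfull, ?_⟩
  intro k l y
  rcases eq_or_ne k l with rfl | hkl
  · obtain ⟨l', hl'k, _⟩ := exists_third hn k k
    have e1 : h.val k k * y = y * h.val l' l' := hDfull k l' y (Ne.symm hl'k)
    have e2 : h.val l' l' = h.val k k := by
      have := hDfull l' k 1 hl'k
      rwa [mul_one, one_mul] at this
    rw [e1, e2]
  · exact hDfull k l y hkl

/-- The cascade: a single seeded annihilation relation for `z` yields the full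
kill-pack for the two-sided family generated by `z`. -/
lemma casc (hn : 3 ≤ n)
    (hNinv : ∀ e ∈ En n R, ∀ g ∈ N, e * g * e⁻¹ ∈ N)
    (hNtv : ∀ g ∈ N, IsTransvection g → g = 1)
    {g : (Matrix (Fin n) (Fin n) R)ˣ} (hg : g ∈ N)
    {z : R} {l0 m0 : Fin n} (h0 : l0 ≠ m0)
    (seed : ∀ w : R, w * z * (g⁻¹).val l0 m0 = 0) :
    (∀ w u a b, a ≠ b → g.val a b * (w * z * u) = 0) ∧
    (∀ w u a b, a ≠ b → (w * z * u) * g.val a b = 0) ∧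
    (∀ w u k l, k ≠ l → g.val k k * (w * z * u) = (w * z * u) * g.val l l) := by
  obtain ⟨k0, hk0l0, hk0m0⟩ := exists_third hn l0 m0
  have T1i : ∀ w, g.val l0 k0 * (w * z) = 0 := fun w =>
    (MW1 N hn hNinv hNtv hg hk0l0 (Ne.symm hk0m0) (Ne.symm h0) (seed w)).1
  have hIn2 : ∀ w u, g.val l0 k0 * (w * z * u) = 0 := by
    intro w u
    rw [← mul_assoc (g.val l0 k0) (w * z) u, T1i w, zero_mul]
  have T2 := fun w u => MW2 N hn hNinv hNtv hg hk0m0 (Ne.symm hk0l0) h0 (hIn2 w u)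
  have T2iv : ∀ w u s, s ≠ k0 → (g⁻¹).val s k0 * (w * z * u) = 0 :=
    fun w u s hs => (T2 w u).1 s hs
  have T2vi : ∀ w u, (w * z * u) * (g⁻¹).val m0 k0 = 0 := fun w u => (T2 w u).2.2
  have T3i : ∀ w u, g.val m0 l0 * (w * z * u) = 0 := fun w u =>
    (MW1 N hn hNinv hNtv hg h0 hk0l0 hk0m0 (T2vi w u)).1
  have T4 := fun w u => MW2 N hn hNinv hNtv hg (Ne.symm hk0l0) (Ne.symm h0)
    (Ne.symm hk0m0) (T3i w u)
  have T4iv : ∀ w u s, s ≠ l0 → (g⁻¹).val s l0 * (w * z * u) = 0 :=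
    fun w u s hs => (T4 w u).1 s hs
  have step : ∀ (k' : Fin n),
      (∀ w u s, s ≠ k' → (g⁻¹).val s k' * (w * z * u) = 0) →
      (∀ w u l3, l3 ≠ k' → (w * z * u) * g.val l3 k' = 0) := by
    intro k' hin w u l3 hl3
    obtain ⟨s, hsk', hsl3⟩ := exists_third hn k' l3
    have h3 := (MW2 N hn hNinv hNtv (inv_mem hg) (Ne.symm hl3) hsk' hsl3
      (hin w u s hsk')).2.2
    rwa [inv_inv] at h3
  have P2k0 := step k0 T2iv
  have P2l0 := step l0 T4iv
  have step' : ∀ (k' : Fin n),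
      (∀ w u l3, l3 ≠ k' → (w * z * u) * g.val l3 k' = 0) →
      (∀ w u l3 k4, l3 ≠ k' → k4 ≠ l3 → k4 ≠ k' → (g⁻¹).val l3 k4 * (w * z * u) = 0) := by
    intro k' hin w u l3 k4 hl3 h43 h4k
    have hyy : (w * z * u) * ((g⁻¹)⁻¹).val l3 k' = 0 := by
      rw [inv_inv]; exact hin w u l3 hl3
    exact (MW1 N hn hNinv hNtv (inv_mem hg) h43 (Ne.symm h4k) (Ne.symm hl3) hyy).1
  have S'k0 := step' k0 P2k0
  have S'l0 := step' l0 P2l0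
  have four : ∀ w u a b, a ≠ b → (g⁻¹).val a b * (w * z * u) = 0 := by
    intro w u a b hab
    rcases eq_or_ne b k0 with hbk0 | hbk0
    · rw [hbk0]; exact T2iv w u a (hbk0 ▸ hab)
    rcases eq_or_ne b l0 with hbl0 | hbl0
    · rw [hbl0]; exact T4iv w u a (hbl0 ▸ hab)
    rcases eq_or_ne a k0 with hak0 | hak0
    · rw [hak0]; exact S'l0 w u k0 b hk0l0 hbk0 hbl0
    · exact S'k0 w u a b hak0 (Ne.symm hab) hbk0
  refine ⟨?_, ?_, ?_⟩
  · intro w u a b hab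
    obtain ⟨α, hαb, hαa⟩ := exists_third hn b a
    obtain ⟨l5, hl5b, hl5α⟩ := exists_third hn b α
    have h3 := (MW2 N hn hNinv hNtv (inv_mem hg) (Ne.symm hl5b) hαb (Ne.symm hl5α)
      (four w u α b hαb)).1 a hab
    rwa [inv_inv] at h3
  · intro w u a b hab
    obtain ⟨α, hαb, hαa⟩ := exists_third hn b a
    have h3 := (MW2 N hn hNinv hNtv (inv_mem hg) (Ne.symm hab) hαb hαa
      (four w u α b hαb)).2.2
    rwa [inv_inv] at h3
  · intro w u k l hkl
    obtain ⟨α, hαk, hαl⟩ := exists_third hn k l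
    have h3 := (MW2 N hn hNinv hNtv (inv_mem hg) hkl hαk hαl
      (four w u α k hαk)).2.1
    rwa [inv_inv] at h3

end Master

end St5

/-- if `g ∈ N` and the commutator `[g, t_{ij}(x)]` has a zero
off-diagonal entry, then `g ∈ C(n, Ann(RxR))`. -/
theorem statement5 {R : Type*} [Ring R] {n : ℕ} (hn : 3 ≤ n)
    (N : Subgroup (Matrix (Fin n) (Fin n) R)ˣ)
    (hNinv : ∀ e ∈ En n R, ∀ g ∈ N, e * g * e⁻¹ ∈ N)
    (hNtv : ∀ g ∈ N, IsTransvection g → g = 1)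
    (g : (Matrix (Fin n) (Fin n) R)ˣ) (hg : g ∈ N)
    (i j : Fin n) (hij : i ≠ j) (x : R)
    (t : (Matrix (Fin n) (Fin n) R)ˣ) (ht : t.val = 1 + Matrix.single i j x)
    (p q : Fin n) (hpq : p ≠ q)
    (hzero : (g * t * g⁻¹ * t⁻¹).val p q = 0) :
    g ∈ CnI n (annIdeal (TwoSidedIdeal.span {x})) := by
  classical
  have ht' : t = St5.tv i j hij x := Units.ext (by rw [ht, St5.tv_val])
  have htEn : t ∈ En n R := by rw [ht']; exact St5.tv_mem i j hij x
  have hhmem : g * t * g⁻¹ * t⁻¹ ∈ N := by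
    have h1 : t * g⁻¹ * t⁻¹ ∈ N := hNinv t htEn g⁻¹ (inv_mem hg)
    have h2 : g * (t * g⁻¹ * t⁻¹) ∈ N := mul_mem hg h1
    have h3 : g * t * g⁻¹ * t⁻¹ = g * (t * g⁻¹ * t⁻¹) := by group
    rw [h3]; exact h2
  obtain ⟨hD1, hD2⟩ := St5.stageA N hn hNinv hNtv hhmem hpq hzero
  -- Stage B : the matrix identity
  have hmat : (g * t * g⁻¹ * t⁻¹).val * (1 + Matrix.single i j x) =
      1 + g.val * Matrix.single i j x * (g⁻¹).val := by
    have h1 : (g * t * g⁻¹ * t⁻¹) * t = g * t * g⁻¹ := by group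
    have h2 := congrArg Units.val h1
    rw [Units.val_mul (g * t * g⁻¹ * t⁻¹) t, ht] at h2
    rw [h2, Units.val_mul, Units.val_mul, ht, mul_add, mul_one, add_mul, Units.mul_inv]
  have hmatAt : ∀ a b, (g * t * g⁻¹ * t⁻¹).val a b +
      (if b = j then (g * t * g⁻¹ * t⁻¹).val a i * x else 0) =
      (1 : Matrix (Fin n) (Fin n) R) a b + g.val a i * x * (g⁻¹).val j b := by
    intro a b
    have e := congrFun (congrFun hmat a) b
    rw [mul_add, mul_one, Matrix.add_apply, St5.mul_sb_apply, Matrix.add_apply,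
      St5.sandwich_apply] at e
    exact e
  have hFseed : ∀ ν μ : Fin n, μ ≠ ν → μ ≠ j → g.val ν i * x * (g⁻¹).val j μ = 0 := by
    intro ν μ hμν hμj
    have e := hmatAt ν μ
    rw [if_neg hμj, add_zero, hD1 ν μ (Ne.symm hμν), Matrix.one_apply_ne (Ne.symm hμν),
      zero_add] at e
    exact e.symm
  have CASC : ∀ ν : Fin n,
      (∀ w u a b, a ≠ b → g.val a b * (w * (g.val ν i * x) * u) = 0) ∧
      (∀ w u a b, a ≠ b → (w * (g.val ν i * x) * u) * g.val a b = 0) ∧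
      (∀ w u k l, k ≠ l →
        g.val k k * (w * (g.val ν i * x) * u) = (w * (g.val ν i * x) * u) * g.val l l) := by
    intro ν
    obtain ⟨μ, hμν, hμj⟩ := St5.exists_third hn ν j
    exact St5.casc N hn hNinv hNtv hg (Ne.symm hμj) (fun w => by
      rw [mul_assoc, hFseed ν μ hμν hμj, mul_zero])
  have hterm : ∀ w u : R, w * x * u =
      ∑ ν : Fin n, w * (g⁻¹).val i ν * (g.val ν i * x) * u := by
    have hBA : (g⁻¹).val * g.val = 1 := Units.inv_mul g
    have h2 : (∑ ν : Fin n, (g⁻¹).val i ν * g.val ν i) = 1 := by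
      rw [← Matrix.mul_apply, hBA, Matrix.one_apply_eq]
    intro w u
    have h1 : w * x = ∑ ν : Fin n, w * (g⁻¹).val i ν * (g.val ν i * x) := by
      calc w * x = w * (∑ ν : Fin n, (g⁻¹).val i ν * g.val ν i) * x := by
            rw [h2, mul_one]
        _ = (∑ ν : Fin n, w * ((g⁻¹).val i ν * g.val ν i)) * x := by
            rw [Finset.mul_sum]
        _ = ∑ ν : Fin n, w * ((g⁻¹).val i ν * g.val ν i) * x := by
            rw [Finset.sum_mul]
        _ = ∑ ν : Fin n, w * (g⁻¹).val i ν * (g.val ν i * x) := by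
            refine Finset.sum_congr rfl fun ν _ => ?_
            rw [← mul_assoc w ((g⁻¹).val i ν) (g.val ν i),
              mul_assoc (w * (g⁻¹).val i ν) (g.val ν i) x]
    rw [h1, Finset.sum_mul]
  have Q1 : ∀ w u : R, ∀ a b, a ≠ b → g.val a b * (w * x * u) = 0 := by
    intro w u a b hab
    rw [hterm w u, Finset.mul_sum]
    exact Finset.sum_eq_zero fun ν _ => (CASC ν).1 (w * (g⁻¹).val i ν) u a b hab
  have Q2 : ∀ w u : R, ∀ a b, a ≠ b → (w * x * u) * g.val a b = 0 := by
    intro w u a b hab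
    rw [hterm w u, Finset.sum_mul]
    exact Finset.sum_eq_zero fun ν _ => (CASC ν).2.1 (w * (g⁻¹).val i ν) u a b hab
  have Q3 : ∀ w u : R, ∀ k l, k ≠ l →
      g.val k k * (w * x * u) = (w * x * u) * g.val l l := by
    intro w u k l hkl
    rw [hterm w u, Finset.mul_sum, Finset.sum_mul]
    exact Finset.sum_congr rfl fun ν _ => (CASC ν).2.2 (w * (g⁻¹).val i ν) u k l hkl
  set S : Set R := {r : R | ∀ w u : R,
      (∀ a b, a ≠ b → g.val a b * (w * r * u) = 0 ∧ (w * r * u) * g.val a b = 0) ∧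
      (∀ k l, k ≠ l → g.val k k * (w * r * u) = (w * r * u) * g.val l l)} with hS
  have hS0 : (0 : R) ∈ S := by
    intro w u
    rw [mul_zero, zero_mul]
    exact ⟨fun a b _ => ⟨mul_zero _, zero_mul _⟩, fun k l _ => by rw [mul_zero, zero_mul]⟩
  have hSadd : ∀ {a b : R}, a ∈ S → b ∈ S → a + b ∈ S := by
    intro a b ha hb w u
    have hsum : w * (a + b) * u = w * a * u + w * b * u := by rw [mul_add, add_mul]
    rw [hsum]
    refine ⟨fun a' b' h' => ⟨?_, ?_⟩, fun k l h' => ?_⟩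
    · rw [mul_add, ((ha w u).1 a' b' h').1, ((hb w u).1 a' b' h').1, add_zero]
    · rw [add_mul, ((ha w u).1 a' b' h').2, ((hb w u).1 a' b' h').2, add_zero]
    · rw [mul_add, add_mul, (ha w u).2 k l h', (hb w u).2 k l h']
  have hSneg : ∀ {a : R}, a ∈ S → -a ∈ S := by
    intro a ha w u
    have hneg : w * (-a) * u = -(w * a * u) := by rw [mul_neg, neg_mul]
    rw [hneg]
    refine ⟨fun a' b' h' => ⟨?_, ?_⟩, fun k l h' => ?_⟩
    · rw [mul_neg, ((ha w u).1 a' b' h').1, neg_zero]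
    · rw [neg_mul, ((ha w u).1 a' b' h').2, neg_zero]
    · rw [mul_neg, neg_mul, (ha w u).2 k l h']
  have hSml : ∀ {r s : R}, s ∈ S → r * s ∈ S := by
    intro r s hs w u
    have h' : w * (r * s) * u = (w * r) * s * u := by rw [mul_assoc w r s]
    rw [h']
    exact hs (w * r) u
  have hSmr : ∀ {r s : R}, r ∈ S → r * s ∈ S := by
    intro r s hr w u
    have h' : w * (r * s) * u = w * r * (s * u) := by
      rw [← mul_assoc w r s, mul_assoc (w * r) s u]
    rw [h']
    exact hr w (s * u)
  set T : TwoSidedIdeal R := TwoSidedIdeal.mk' S hS0 hSadd hSneg hSml hSmr with hT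
  have hxS : x ∈ S := fun w u =>
    ⟨fun a b hab => ⟨Q1 w u a b hab, Q2 w u a b hab⟩, fun k l hkl => Q3 w u k l hkl⟩
  have hspan : ∀ r ∈ TwoSidedIdeal.span {x}, r ∈ S := by
    intro r hr
    have hsub : ({x} : Set R) ⊆ (T : Set R) := by
      intro s hs
      rw [Set.mem_singleton_iff] at hs
      rw [hs]
      exact SetLike.mem_coe.mpr
        ((TwoSidedIdeal.mem_mk' S hS0 hSadd hSneg hSml hSmr x).mpr hxS)
    have hmem := TwoSidedIdeal.mem_span_iff.mp hr T hsub
    exact (TwoSidedIdeal.mem_mk' S hS0 hSadd hSneg hSml hSmr r).mp hmem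
  have hOff : ∀ a b, a ≠ b → g.val a b ∈ annIdeal (TwoSidedIdeal.span {x}) := by
    intro a b hab
    simp only [annIdeal, TwoSidedIdeal.mem_mk', Set.mem_setOf_eq]
    intro r hr
    constructor
    · have h' := ((hspan r hr 1 1).1 a b hab).1
      rwa [one_mul, mul_one] at h'
    · have h' := ((hspan r hr 1 1).1 a b hab).2
      rwa [one_mul, mul_one] at h'
  have htrans : ∀ (r : R), r ∈ TwoSidedIdeal.span {x} → ∀ k l, k ≠ l →
      g.val k k * r = r * g.val l l := by
    intro r hr k l hkl
    have h' := (hspan r hr 1 1).2 k l hkl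
    rwa [one_mul, mul_one] at h'
  have htransw : ∀ (r : R), r ∈ TwoSidedIdeal.span {x} → ∀ (w : R), ∀ k l, k ≠ l →
      g.val k k * (w * r) = w * r * g.val l l := by
    intro r hr w k l hkl
    have h' := (hspan r hr w 1).2 k l hkl
    rwa [mul_one] at h'
  have hDiagDiff : ∀ k l, g.val k k - g.val l l ∈ annIdeal (TwoSidedIdeal.span {x}) := by
    intro k l
    simp only [annIdeal, TwoSidedIdeal.mem_mk', Set.mem_setOf_eq]
    intro r hr
    obtain ⟨l', hl'k, hl'l⟩ := St5.exists_third hn k l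
    constructor
    · rw [sub_mul, htrans r hr k l' (Ne.symm hl'k), htrans r hr l l' (Ne.symm hl'l),
        sub_self]
    · have e1 : g.val l' l' * r = r * g.val k k := htrans r hr l' k hl'k
      have e2 : g.val l' l' * r = r * g.val l l := htrans r hr l' l hl'l
      rw [mul_sub, ← e1, ← e2, sub_self]
  have hComm : ∀ (k : Fin n) (r0 : R), g.val k k * r0 - r0 * g.val k k ∈
      annIdeal (TwoSidedIdeal.span {x}) := by
    intro k r0
    simp only [annIdeal, TwoSidedIdeal.mem_mk', Set.mem_setOf_eq]
    intro r hr
    obtain ⟨l', hl'k, _⟩ := St5.exists_third hn k k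
    constructor
    · have e1 : g.val k k * (r0 * r) = r0 * r * g.val l' l' :=
        htransw r hr r0 k l' (Ne.symm hl'k)
      have e2 : g.val k k * r = r * g.val l' l' := htrans r hr k l' (Ne.symm hl'k)
      rw [sub_mul, mul_assoc (g.val k k) r0 r, e1, mul_assoc r0 (g.val k k) r, e2,
        ← mul_assoc r0 r (g.val l' l'), sub_self]
    · have e1 : g.val l' l' * r = r * g.val k k := htrans r hr l' k hl'k
      have e2 : g.val l' l' * (r * r0) = r * r0 * g.val k k :=
        htrans (r * r0) ((TwoSidedIdeal.span {x}).mul_mem_right r r0 hr) l' k hl'k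
      rw [mul_sub, ← mul_assoc r (g.val k k) r0, ← e1,
        mul_assoc (g.val l' l') r r0, e2, ← mul_assoc r r0 (g.val k k), sub_self]
  -- the reduction of `g` is a central scalar
  have hn0 : 0 < n := by omega
  set kk0 : Fin n := ⟨0, hn0⟩ with hkk0
  set Ia := TwoSidedIdeal.span {x} with hIa
  set c : RingCon R := (annIdeal Ia).ringCon with hc
  have hz : ∀ r : R, r ∈ annIdeal Ia → (RingCon.mk' c) r = 0 := by
    intro r h
    exact (RingCon.eq _).mpr ((TwoSidedIdeal.rel_iff _ _ _).mpr (by rwa [sub_zero]))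
  have hdiagq : ∀ a b : Fin n,
      (RingCon.mk' c) (g.val a a) = (RingCon.mk' c) (g.val b b) := by
    intro a b
    exact (RingCon.eq _).mpr ((TwoSidedIdeal.rel_iff _ _ _).mpr (hDiagDiff a b))
  have hcent : ∀ r : R, (RingCon.mk' c) (g.val kk0 kk0) * (RingCon.mk' c) r
      = (RingCon.mk' c) r * (RingCon.mk' c) (g.val kk0 kk0) := by
    intro r
    rw [← _root_.map_mul, ← _root_.map_mul]
    exact (RingCon.eq _).mpr ((TwoSidedIdeal.rel_iff _ _ _).mpr (hComm kk0 r))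
  show g ∈ CnI n (annIdeal Ia)
  simp only [CnI]
  refine Subgroup.mem_comap.mpr (Subgroup.mem_center_iff.mpr ?_)
  intro u
  apply Units.ext
  rw [Units.val_mul, Units.val_mul]
  have hval : (lamI n (annIdeal Ia) g).val = g.val.map (RingCon.mk' c) := by
    simp only [lamI, Units.coe_map, RingHom.toMonoidHom_eq_coe, MonoidHom.coe_coe,
      RingHom.mapMatrix_apply, hc]
    rfl
  rw [hval]
  set alp := (RingCon.mk' c) (g.val kk0 kk0) with halp
  have hMq : ∀ a b, (g.val.map (RingCon.mk' c)) a b = if a = b then alp else 0 := by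
    intro a b
    rw [Matrix.map_apply]
    rcases eq_or_ne a b with hab | hab
    · rw [if_pos hab, halp, hab]
      exact hdiagq b kk0
    · rw [if_neg hab]
      exact hz _ (hOff a b hab)
  have hacomm : ∀ qq : c.Quotient, qq * alp = alp * qq := by
    intro qq
    obtain ⟨r, rfl⟩ := Quotient.exists_rep qq
    exact (hcent r).symm
  ext a b
  rw [Matrix.mul_apply, Matrix.mul_apply]
  calc ∑ cx, u.val a cx * (g.val.map (RingCon.mk' c)) cx b
      = ∑ cx, u.val a cx * (if cx = b then alp else 0) := by
        refine Finset.sum_congr rfl fun cx _ => ?_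
        rw [hMq]
    _ = u.val a b * alp := by simp [mul_ite, Finset.sum_ite_eq']
    _ = alp * u.val a b := hacomm _
    _ = ∑ cx, (if a = cx then alp else 0) * u.val cx b := by
        simp [ite_mul, Finset.sum_ite_eq]
    _ = ∑ cx, (g.val.map (RingCon.mk' c)) a cx * u.val cx b := by
        refine Finset.sum_congr rfl fun cx _ => ?_
        rw [hMq]
end

section
/- Let a, b be elements of an associative ring R with identity. Then 1 + ab is invertible in R if and only if 1 + ba is invertible in R. Moreover, if a² = b² = 0 and 1 + ab is invertible with inverse γ = (1+ab)⁻¹, then 1 + a and 1 − b are invertible and one has the decomposition 1 + ab = (1 + b(1−γ)) · (1−b)(1+a)(1−b)⁻¹(1+a)⁻¹ · (1 + (1−γ)a) · (1 + ba). -/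
/- Common definitions: linear groups over an associative ring with identity,
transvections, elementary subgroups, congruence subgroups, and the
stability-theoretic properties of rings, following V. M. Petechuk,
"Stability of rings". Throughout, `GL(n,R)` is realized as the group of
units `(Matrix (Fin n) (Fin n) R)ˣ`. -/

open Matrix

private lemma oneAddMul_unit {R : Type*} [Ring R] (a b : R) :
    IsUnit (1 + a * b) → IsUnit (1 + b * a) := by
  rintro ⟨u, hu⟩
  set v : R := ((u⁻¹ : Rˣ) : R) with hv
  have h1 : (1 + a * b) * v = 1 := by rw [← hu]; exact u.mul_inv
  have h2 : v * (1 + a * b) = 1 := by rw [← hu]; exact u.inv_mul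
  have h1' : a * b * v = 1 - v := by
    have h : v + a * b * v = 1 := by rw [← h1]; noncomm_ring
    rw [← h]; noncomm_ring
  have h2' : v * (a * b) = 1 - v := by
    have h : v + v * (a * b) = 1 := by rw [← h2]; noncomm_ring
    rw [← h]; noncomm_ring
  refine ⟨⟨1 + b * a, 1 - b * v * a, ?_, ?_⟩, rfl⟩
  · rw [show (1 + b * a) * (1 - b * v * a) =
        1 + b * a - b * v * a - b * (a * b * v) * a by noncomm_ring, h1']
    noncomm_ring
  · rw [show (1 - b * v * a) * (1 + b * a) =
        1 + b * a - b * v * a - b * (v * (a * b)) * a by noncomm_ring, h2']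
    noncomm_ring

/-- `1 + ab` is invertible iff `1 + ba` is; and if `a² = b² = 0` and
`1 + ab` is invertible with inverse `γ`, then `1 + a` and `1 − b` are invertible and
`1 + ab = (1 + b(1−γ))·[1−b, 1+a]·(1 + (1−γ)a)·(1 + ba)`. -/
theorem statement9 {R : Type*} [Ring R] (a b : R) :
    (IsUnit (1 + a * b) ↔ IsUnit (1 + b * a)) ∧
    (a * a = 0 → b * b = 0 →
      ∀ w : Rˣ, (w : R) = 1 + a * b →
        ∃ u v : Rˣ, (u : R) = 1 - b ∧ (v : R) = 1 + a ∧
          1 + a * b =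
            (1 + b * (1 - ((w⁻¹ : Rˣ) : R))) * ((u * v * u⁻¹ * v⁻¹ : Rˣ) : R) *
              (1 + (1 - ((w⁻¹ : Rˣ) : R)) * a) * (1 + b * a)) := by
  constructor
  · exact ⟨oneAddMul_unit a b, oneAddMul_unit b a⟩
  · intro ha hb w hw
    set g : R := ((w⁻¹ : Rˣ) : R) with hgdef
    have h1 : (1 + a * b) * g = 1 := by rw [← hw]; exact w.mul_inv
    have h2 : g * (1 + a * b) = 1 := by rw [← hw]; exact w.inv_mul
    refine ⟨⟨1 - b, 1 + b, ?_, ?_⟩, ⟨1 + a, 1 - a, ?_, ?_⟩, rfl, rfl, ?_⟩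
    · rw [show (1 - b) * (1 + b) = 1 - b * b by noncomm_ring, hb, sub_zero]
    · rw [show (1 + b) * (1 - b) = 1 - b * b by noncomm_ring, hb, sub_zero]
    · rw [show (1 + a) * (1 - a) = 1 - a * a by noncomm_ring, ha, sub_zero]
    · rw [show (1 - a) * (1 + a) = 1 - a * a by noncomm_ring, ha, sub_zero]
    · simp only [Units.val_mul]
      show 1 + a * b =
        (1 + b * (1 - g)) * ((1 - b) * (1 + a) * (1 + b) * (1 - a)) *
          (1 + (1 - g) * a) * (1 + b * a)
      have habg : a * b * g = 1 - g := by
        have h : g + a * b * g = 1 := by rw [← h1]; noncomm_ring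
        rw [← h]; noncomm_ring
      have hgab : g * (a * b) = 1 - g := by
        have h : g + g * (a * b) = 1 := by rw [← h2]; noncomm_ring
        rw [← h]; noncomm_ring
      have hag : a * g = a := by
        have hg : g = 1 - a * b * g := by rw [habg]; noncomm_ring
        have h3 : a * g = a * (1 - a * b * g) := by rw [← hg]
        rw [show a * (1 - a * b * g) = a - (a * a) * (b * g) by noncomm_ring, ha,
          zero_mul, sub_zero] at h3
        exact h3
      have hgb : g * b = b := by
        have hg : g = 1 - g * (a * b) := by rw [hgab]; noncomm_ring
        have h3 : g * b = (1 - g * (a * b)) * b := by rw [← hg]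
        rw [show (1 - g * (a * b)) * b = b - (g * a) * (b * b) by noncomm_ring, hb,
          mul_zero, sub_zero] at h3
        exact h3
      have ha' : ∀ x : R, a * (a * x) = 0 := fun x => by rw [← mul_assoc, ha, zero_mul]
      have hb' : ∀ x : R, b * (b * x) = 0 := fun x => by rw [← mul_assoc, hb, zero_mul]
      have hag' : ∀ x : R, a * (g * x) = a * x := fun x => by rw [← mul_assoc, hag]
      have hgb' : ∀ x : R, g * (b * x) = b * x := fun x => by rw [← mul_assoc, hgb]
      have habg' : ∀ x : R, a * (b * (g * x)) = x - g * x := fun x => by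
        rw [show a * (b * (g * x)) = (a * b * g) * x by noncomm_ring, habg, sub_mul, one_mul]
      have hgab' : ∀ x : R, g * (a * (b * x)) = x - g * x := fun x => by
        rw [show g * (a * (b * x)) = (g * (a * b)) * x by noncomm_ring, hgab, sub_mul, one_mul]
      have habg2 : a * (b * g) = 1 - g := by rw [← mul_assoc, habg]
      simp only [mul_add, add_mul, mul_sub, sub_mul, mul_one, one_mul, mul_assoc,
        ha, hb, ha', hb', hag, hgb, hag', hgb', habg', hgab', habg2, hgab,
        zero_mul, mul_zero, zero_add, add_zero, sub_zero, zero_sub]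
      abel
end
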